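/- arXiv:1705.02779 — 8 statements merged into one kernel-verified Lean document; each statement's English description precedes it below -/
import Mathlib

section
/- Let f : (0,∞) → ℂ be continuous, let m ∈ ℕ and let f₋ₘ, …, f₀ ∈ ℂ be such that (i) there is C > 0 with |f(t) − ∑_{i=−m}^{0} fᵢ tⁱ| ≤ C·t for all t ∈ (0,1], and (ii) there are C′, λ > 0 with |f(t)| ≤ C′·e^{−λt} for all t ≥ 1. Then there exists a function g : ℂ → ℂ, holomorphic on {z : Re z > −1} ∖ {1, 2, …, m}, such that: (a) for every z with Re z > m one has Γ(z)·g(z) = ∫₀^∞ f(t)·t^{z−1} dt; (b) g(0) = f₀; and (c) g′(0) = ∫₀¹ (f(t) − ∑_{i=−m}^{0} fᵢ tⁱ) dt/t + ∫₁^∞ f(t) dt/t + ∑_{i=−m}^{−1} fᵢ/i + γ·f₀, where γ is the Euler–Mascheroni constant (γ = −Γ′(1)). -/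
open Filter Set MeasureTheory

open scoped Topology

lemma hasMellin_finset_sum {ι : Type*} (s : Finset ι) (F : ι → ℝ → ℂ) (z : ℂ) (M : ι → ℂ)
    (h : ∀ i ∈ s, HasMellin (F i) z (M i)) :
    HasMellin (fun t => ∑ i ∈ s, F i t) z (∑ i ∈ s, M i) := by
  classical
  induction s using Finset.induction_on with
  | empty =>
      refine ⟨?_, ?_⟩
      · simpa [MellinConvergent] using (integrable_zero _ _ _)
      · simp [mellin]
  | @insert a s hx ih =>
      have hA := h a (Finset.mem_insert_self a s)
      have hS := ih fun i hi => h i (Finset.mem_insert_of_mem hi)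
      have := hasMellin_add hA.1 hS.1
      rw [hA.2, hS.2] at this
      simpa [Finset.sum_insert hx] using this

/-- Properties of the Mellin transform of a function admitting an asymptotic
expansion `∑_{i=-m}^{0} fᵢ tⁱ + O(t)` at `t → 0⁺` and exponential decay at infinity:
it extends holomorphically to `{Re z > -1} ∖ {1, …, m}`, with explicit value and
derivative at `z = 0`. -/
theorem mellin_transform_extension_value_and_deriv_at_zero
    (f : ℝ → ℂ) (hf : ContinuousOn f (Set.Ioi (0 : ℝ)))
    (m : ℕ) (c : ℤ → ℂ)
    (h0 : ∃ C > (0 : ℝ), ∀ t ∈ Set.Ioc (0 : ℝ) 1,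
      ‖f t - ∑ i ∈ Finset.Icc (-(m : ℤ)) 0, c i * (t : ℂ) ^ i‖ ≤ C * t)
    (hinf : ∃ C' > (0 : ℝ), ∃ lam > (0 : ℝ), ∀ t : ℝ, 1 ≤ t →
      ‖f t‖ ≤ C' * Real.exp (-lam * t)) :
    ∃ g : ℂ → ℂ,
      DifferentiableOn ℂ g
        ({z : ℂ | -1 < z.re} \ {z : ℂ | ∃ k : ℕ, 1 ≤ k ∧ k ≤ m ∧ z = (k : ℂ)}) ∧
      (∀ z : ℂ, (m : ℝ) < z.re →
        Complex.Gamma z * g z = ∫ t in Set.Ioi (0 : ℝ), f t * (t : ℂ) ^ (z - 1)) ∧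
      g 0 = c 0 ∧
      HasDerivAt g
        ((∫ t in Set.Ioc (0 : ℝ) 1,
            (f t - ∑ i ∈ Finset.Icc (-(m : ℤ)) 0, c i * (t : ℂ) ^ i) / (t : ℂ)) +
          (∫ t in Set.Ioi (1 : ℝ), f t / (t : ℂ)) +
          (∑ i ∈ Finset.Icc (-(m : ℤ)) (-1), c i / (i : ℂ)) +
          (Real.eulerMascheroniConstant : ℂ) * c 0) 0 := by
  classical
  obtain ⟨C, hCpos, hC⟩ := h0
  obtain ⟨C', hC'pos, lam, hlam, hC'⟩ := hinf
  set P : ℝ → ℂ := fun t => ∑ i ∈ Finset.Icc (-(m : ℤ)) 0, c i * (t : ℂ) ^ i with hP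
  set h : ℝ → ℂ := fun t => f t - P t with hh
  set F₁ : ℝ → ℂ := (Set.Ioc (0:ℝ) 1).indicator h with hF₁
  set F₂ : ℝ → ℂ := (Set.Ioi (1:ℝ)).indicator f with hF₂
  -- continuity of h
  have hPcont : ContinuousOn P (Set.Ioi (0:ℝ)) := by
    apply continuousOn_finset_sum
    intro i _
    exact continuousOn_const.mul
      ((Complex.continuous_ofReal.continuousOn).zpow₀ i
        (fun t ht => Or.inl (by exact_mod_cast ne_of_gt (Set.mem_Ioi.mp ht))))
  have hhcont : ContinuousOn h (Set.Ioi (0:ℝ)) := hf.sub hPcont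
  -- integrability of F₁
  have hint_h : IntegrableOn h (Set.Ioc (0:ℝ) 1) := by
    refine Integrable.mono' (integrable_const C) ?_ ?_
    · exact (hhcont.mono Set.Ioc_subset_Ioi_self).aestronglyMeasurable measurableSet_Ioc
    · refine (ae_restrict_iff' measurableSet_Ioc).2 (ae_of_all _ fun t ht => ?_)
      calc ‖h t‖ ≤ C * t := hC t ht
        _ ≤ C * 1 := by nlinarith [ht.2, hCpos]
        _ = C := mul_one C
  have hF₁_int : IntegrableOn F₁ (Set.Ioi (0:ℝ)) := by
    rw [hF₁, IntegrableOn, integrable_indicator_iff measurableSet_Ioc, IntegrableOn,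
      Measure.restrict_restrict_of_subset Set.Ioc_subset_Ioi_self]
    exact hint_h
  have hint_f1 : IntegrableOn f (Set.Ioi (1:ℝ)) := by
    refine Integrable.mono' ((exp_neg_integrableOn_Ioi 1 hlam).const_mul C') ?_ ?_
    · exact (hf.mono (Set.Ioi_subset_Ioi zero_le_one)).aestronglyMeasurable measurableSet_Ioi
    · refine (ae_restrict_iff' measurableSet_Ioi).2 (ae_of_all _ fun t ht => ?_)
      exact hC' t (le_of_lt (Set.mem_Ioi.mp ht))
  have hF₂_int : IntegrableOn F₂ (Set.Ioi (0:ℝ)) := by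
    rw [hF₂, IntegrableOn, integrable_indicator_iff measurableSet_Ioi, IntegrableOn,
      Measure.restrict_restrict_of_subset (Set.Ioi_subset_Ioi zero_le_one)]
    exact hint_f1
  have hF₁_li : LocallyIntegrableOn F₁ (Set.Ioi (0:ℝ)) := hF₁_int.locallyIntegrableOn
  have hF₂_li : LocallyIntegrableOn F₂ (Set.Ioi (0:ℝ)) := hF₂_int.locallyIntegrableOn
  -- big-O facts
  have hF₁_top : ∀ a : ℝ, F₁ =O[atTop] (· ^ (-a)) := by
    intro a
    have hev : F₁ =ᶠ[atTop] (fun _ => (0:ℂ)) := by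
      filter_upwards [eventually_gt_atTop 1] with t ht
      exact Set.indicator_of_notMem (fun hmem => absurd hmem.2 (not_le.2 ht)) _
    exact hev.trans_isBigO (Asymptotics.isBigO_zero _ _)
  have hF₁_bot : F₁ =O[𝓝[>] (0:ℝ)] (· ^ (-(-1):ℝ)) := by
    rw [Asymptotics.isBigO_iff]
    refine ⟨C, ?_⟩
    filter_upwards [Ioc_mem_nhdsGT_of_mem (Set.left_mem_Ico.mpr one_pos)] with t ht
    rw [hF₁, Set.indicator_of_mem ht]
    have ht0 : (0:ℝ) < t := ht.1
    have : t ^ (-(-1):ℝ) = t := by rw [neg_neg, Real.rpow_one]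
    rw [this, Real.norm_eq_abs, abs_of_pos ht0]
    exact hC t ht
  have hF₂_top : F₂ =O[atTop] (fun t => Real.exp (-lam * t)) := by
    rw [Asymptotics.isBigO_iff]
    refine ⟨C', ?_⟩
    filter_upwards [eventually_ge_atTop 1] with t ht
    rw [Real.norm_eq_abs, abs_of_pos (Real.exp_pos _)]
    exact le_trans (norm_indicator_le_norm_self f t) (hC' t ht)
  have hF₂_bot : ∀ b : ℝ, F₂ =O[𝓝[>] (0:ℝ)] (· ^ (-b)) := by
    intro b
    have hev : F₂ =ᶠ[𝓝[>] (0:ℝ)] (fun _ => (0:ℂ)) := by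
      filter_upwards [Ioc_mem_nhdsGT_of_mem (Set.left_mem_Ico.mpr one_pos)] with t ht
      exact Set.indicator_of_notMem (by simpa using not_lt.2 ht.2) _
    exact hev.trans_isBigO (Asymptotics.isBigO_zero _ _)
  -- differentiability / convergence of the two Mellin transforms
  have hM₁_diff : ∀ z : ℂ, -1 < z.re → DifferentiableAt ℂ (mellin F₁) z := fun z hz =>
    mellin_differentiableAt_of_isBigO_rpow hF₁_li (hF₁_top (z.re + 1)) (lt_add_one _)
      hF₁_bot hz
  have hM₂_diff : ∀ z : ℂ, DifferentiableAt ℂ (mellin F₂) z := fun z =>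
    mellin_differentiableAt_of_isBigO_rpow_exp hlam hF₂_li hF₂_top (hF₂_bot (z.re - 1))
      (by linarith)
  have hM₁_conv : ∀ z : ℂ, -1 < z.re → MellinConvergent F₁ z := fun z hz =>
    mellinConvergent_of_isBigO_rpow hF₁_li (hF₁_top (z.re + 1)) (lt_add_one _) hF₁_bot hz
  have hM₂_conv : ∀ z : ℂ, MellinConvergent F₂ z := fun z =>
    mellinConvergent_of_isBigO_rpow_exp hlam hF₂_li hF₂_top (hF₂_bot (z.re - 1)) (by linarith)
  set S : ℂ → ℂ := fun z => ∑ i ∈ Finset.Icc (-(m:ℤ)) (-1), c i / (z + (i:ℂ)) with hS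
  set g : ℂ → ℂ := fun z =>
    (Complex.Gamma z)⁻¹ * (mellin F₁ z + mellin F₂ z + S z)
      + c 0 * (Complex.Gamma (z + 1))⁻¹ with hg
  refine ⟨g, ?_, ?_, ?_, ?_⟩
  · -- differentiability on the domain
    intro z hz
    obtain ⟨hz1, hz2⟩ := hz
    simp only [Set.mem_setOf_eq] at hz1 hz2
    apply DifferentiableAt.differentiableWithinAt
    apply DifferentiableAt.add
    · apply DifferentiableAt.mul
      · exact Complex.differentiable_one_div_Gamma.differentiableAt
      · refine ((hM₁_diff z hz1).add (hM₂_diff z)).add ?_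
        refine DifferentiableAt.fun_sum fun i hi => ?_
        rw [Finset.mem_Icc] at hi
        have hne : z + (i:ℂ) ≠ 0 := by
          intro hzero
          apply hz2
          refine ⟨(-i).toNat, by omega, by omega, ?_⟩
          have h1 : z = -(i:ℂ) := by linear_combination hzero
          have h2 : (((-i).toNat : ℤ) : ℂ) = -(i:ℂ) := by
            rw [Int.toNat_of_nonneg (by omega : (0:ℤ) ≤ -i)]; push_cast; ring
          rw [h1, ← h2]; norm_cast
        exact (differentiableAt_const _).div (differentiableAt_id.add_const _) hne
    · exact (Complex.differentiable_one_div_Gamma.comp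
        (differentiable_id.add_const 1)).differentiableAt.const_mul _
  · -- value for re z > m
    intro z hz
    have hz0 : (0:ℝ) < z.re := lt_of_le_of_lt (Nat.cast_nonneg m) hz
    have hzne : z ≠ 0 := by
      intro hzz; rw [hzz] at hz0; simp at hz0
    have hΓne : Complex.Gamma z ≠ 0 := Complex.Gamma_ne_zero_of_re_pos hz0
    have hpow : ∀ i ∈ Finset.Icc (-(m:ℤ)) 0,
        HasMellin (fun t : ℝ => c i •
            Set.indicator (Set.Ioc (0:ℝ) 1) (fun t : ℝ => (t:ℂ) ^ (i:ℂ)) t) z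
          (c i • (1 / (z + (i:ℂ)))) := by
      intro i hi
      rw [Finset.mem_Icc] at hi
      have hre : 0 < z.re + ((i:ℂ)).re := by
        rw [Complex.intCast_re]
        have h1 : ((-(m:ℤ) : ℤ) : ℝ) ≤ (i : ℝ) := by exact_mod_cast hi.1
        push_cast at h1
        linarith
      have hcp := hasMellin_cpow_Ioc (i:ℂ) hre
      exact ⟨hcp.1.const_smul _, by rw [mellin_const_smul, hcp.2]⟩
    have hsum := hasMellin_finset_sum (Finset.Icc (-(m:ℤ)) 0) _ z _ hpow
    have hA := hasMellin_add (hM₁_conv z (by linarith)) hsum.1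
    rw [hsum.2] at hA
    have hQ := hasMellin_add hA.1 (hM₂_conv z)
    rw [hA.2] at hQ
    have hfeq : Set.EqOn (fun t : ℝ => f t * (t:ℂ) ^ (z-1))
        (fun t : ℝ => (t:ℂ) ^ (z-1) •
          ((F₁ t + ∑ i ∈ Finset.Icc (-(m:ℤ)) 0, c i •
            Set.indicator (Set.Ioc (0:ℝ) 1) (fun t : ℝ => (t:ℂ) ^ (i:ℂ)) t) + F₂ t))
        (Set.Ioi (0:ℝ)) := by
      intro t ht
      simp only [smul_eq_mul]
      rw [mul_comm]
      congr 1
      rcases le_or_gt t 1 with h1 | h1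
      · have hmem : t ∈ Set.Ioc (0:ℝ) 1 := ⟨ht, h1⟩
        rw [hF₁, hF₂, Set.indicator_of_mem hmem,
          Set.indicator_of_notMem (by simpa using not_lt.2 h1 : t ∉ Set.Ioi (1:ℝ))]
        simp only [Set.indicator_of_mem hmem, Complex.cpow_intCast, hh, hP]
        ring
      · have hnmem : t ∉ Set.Ioc (0:ℝ) 1 := fun hm => absurd hm.2 (not_le.2 h1)
        rw [hF₁, hF₂, Set.indicator_of_notMem hnmem,
          Set.indicator_of_mem (Set.mem_Ioi.2 h1)]
        simp only [Set.indicator_of_notMem hnmem, mul_zero, Finset.sum_const_zero]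
        ring
    have hRHS : (∫ t in Set.Ioi (0:ℝ), f t * (t:ℂ) ^ (z-1))
        = mellin F₁ z + (∑ i ∈ Finset.Icc (-(m:ℤ)) 0, c i • (1 / (z + (i:ℂ))))
          + mellin F₂ z := by
      rw [setIntegral_congr_fun measurableSet_Ioi hfeq, ← mellin, hQ.2]
    rw [hRHS]
    -- split off the i = 0 term
    have hsplit : Finset.Icc (-(m:ℤ)) 0 = insert 0 (Finset.Icc (-(m:ℤ)) (-1)) := by
      ext x
      simp only [Finset.mem_Icc, Finset.mem_insert]
      omega
    rw [hsplit, Finset.sum_insert (by simp)]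
    have hΓ1 : Complex.Gamma (z + 1) = z * Complex.Gamma z := Complex.Gamma_add_one z hzne
    rw [hg]
    simp only [hΓ1]
    have hzΓ : z * Complex.Gamma z ≠ 0 := mul_ne_zero hzne hΓne
    field_simp
    simp only [smul_eq_mul, hS]
    field_simp
    simp only [Int.cast_zero, add_zero]
    have hzc : z * (c 0 / z) = c 0 := by field_simp
    linear_combination (-1:ℂ) * hzc
  · -- value at 0
    simp [hg, Complex.Gamma_zero, Complex.Gamma_one]
  · -- derivative at 0
    have hinv1 : HasDerivAt (fun z : ℂ => (Complex.Gamma (z+1))⁻¹)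
        ((Real.eulerMascheroniConstant : ℂ)) 0 := by
      have h1 : HasDerivAt (fun z : ℂ => Complex.Gamma (z+1))
          (-(Real.eulerMascheroniConstant : ℂ)) 0 := by
        have hadd : HasDerivAt (fun z : ℂ => z + 1) 1 0 := (hasDerivAt_id 0).add_const 1
        have hG : HasDerivAt Complex.Gamma (-(Real.eulerMascheroniConstant:ℂ)) ((0:ℂ)+1) := by
          simpa using Complex.hasDerivAt_Gamma_one
        have h2 := hG.comp (0:ℂ) hadd
        rw [mul_one] at h2
        exact h2
      have h3 := h1.inv (by simp [Complex.Gamma_one])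
      simp [Complex.Gamma_one] at h3
      exact h3
    have hinvΓ : HasDerivAt (fun z : ℂ => (Complex.Gamma z)⁻¹) 1 0 := by
      have heq : (fun z : ℂ => (Complex.Gamma z)⁻¹)
          = fun z => z * (Complex.Gamma (z+1))⁻¹ := by
        funext z
        have := Complex.one_div_Gamma_eq_self_mul_one_div_Gamma_add_one z
        simpa [one_div] using this
      rw [heq]
      have h4 := (hasDerivAt_id (0:ℂ)).mul hinv1
      simp [Complex.Gamma_one] at h4
      exact h4
    have hMS : DifferentiableAt ℂ (fun z => mellin F₁ z + mellin F₂ z + S z) 0 := by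
      refine ((hM₁_diff 0 (by norm_num)).add (hM₂_diff 0)).add ?_
      refine DifferentiableAt.fun_sum fun i hi => ?_
      rw [Finset.mem_Icc] at hi
      have hne : (0:ℂ) + (i:ℂ) ≠ 0 := by
        rw [zero_add]
        exact_mod_cast (by omega : (i:ℤ) ≠ 0)
      exact (differentiableAt_const _).div (differentiableAt_id.add_const _) hne
    have hd1 := hinvΓ.mul hMS.hasDerivAt
    have hd2 := hinv1.const_mul (c 0)
    have hD := hd1.add hd2
    -- compute mellin values at 0
    have hval₁ : mellin F₁ 0 = ∫ t in Set.Ioc (0:ℝ) 1, h t / (t:ℂ) := by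
      rw [mellin]
      have heq : ∀ t : ℝ, (t:ℂ) ^ ((0:ℂ)-1) • F₁ t
          = Set.indicator (Set.Ioc (0:ℝ) 1) (fun t : ℝ => h t / (t:ℂ)) t := by
        intro t
        rw [hF₁]
        by_cases hmem : t ∈ Set.Ioc (0:ℝ) 1
        · rw [Set.indicator_of_mem hmem, Set.indicator_of_mem hmem, smul_eq_mul,
            zero_sub, Complex.cpow_neg_one, div_eq_mul_inv, mul_comm]
        · rw [Set.indicator_of_notMem hmem, Set.indicator_of_notMem hmem, smul_zero]
      simp_rw [heq]
      rw [setIntegral_indicator measurableSet_Ioc,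
        Set.inter_eq_right.mpr Set.Ioc_subset_Ioi_self]
    have hval₂ : mellin F₂ 0 = ∫ t in Set.Ioi (1:ℝ), f t / (t:ℂ) := by
      rw [mellin]
      have heq : ∀ t : ℝ, (t:ℂ) ^ ((0:ℂ)-1) • F₂ t
          = Set.indicator (Set.Ioi (1:ℝ)) (fun t : ℝ => f t / (t:ℂ)) t := by
        intro t
        rw [hF₂]
        by_cases hmem : t ∈ Set.Ioi (1:ℝ)
        · rw [Set.indicator_of_mem hmem, Set.indicator_of_mem hmem, smul_eq_mul,
            zero_sub, Complex.cpow_neg_one, div_eq_mul_inv, mul_comm]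
        · rw [Set.indicator_of_notMem hmem, Set.indicator_of_notMem hmem, smul_zero]
      simp_rw [heq]
      rw [setIntegral_indicator measurableSet_Ioi,
        Set.inter_eq_right.mpr (Set.Ioi_subset_Ioi zero_le_one)]
    refine hD.congr_deriv ?_
    rw [Complex.Gamma_zero, hval₁, hval₂]
    simp only [hS, hh, hP, zero_add, inv_zero, zero_mul, one_mul, add_zero]
    ring
end

section
/- For every z ∈ ℂ with Re z > 2 one has ∫₀^∞ u^{z−1} · e^{−2πu}/(1 − e^{−2πu})² du = Γ(z) · (2π)^{−z} · ζ(z−1). -/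
open Real Set MeasureTheory

/-- The Mellin transform identity `∫₀^∞ u^{z-1} e^{-2πu}/(1-e^{-2πu})² du
  = Γ(z) (2π)^{-z} ζ(z-1)` for `Re z > 2`. -/
theorem mellin_g_two (z : ℂ) (hz : 2 < z.re) :
    ∫ u in Set.Ioi (0 : ℝ),
        (u : ℂ) ^ (z - 1) *
          ((Real.exp (-(2 * π * u)) / (1 - Real.exp (-(2 * π * u))) ^ 2 : ℝ) : ℂ)
      = Complex.Gamma z * (2 * (π : ℂ)) ^ (-z) * riemannZeta (z - 1) := by
  have hz0 : 0 < z.re := by linarith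
  have hzne : z ≠ 0 := fun h ↦ by simp [h] at hz0
  have hz1ne : z - 1 ≠ 0 := by
    intro h
    have : z = 1 := by linear_combination h
    rw [this] at hz; norm_num at hz
  set F : ℝ → ℂ := fun u ↦
    ((Real.exp (-(2 * π * u)) / (1 - Real.exp (-(2 * π * u))) ^ 2 : ℝ) : ℂ) with hFdef
  have hF : ∀ t ∈ Set.Ioi (0 : ℝ),
      HasSum (fun n : ℕ ↦ (n : ℂ) * Real.exp (-(2 * π * n) * t)) (F t) := by
    intro t ht
    have ht' : (0 : ℝ) < t := ht
    have hx : ‖Real.exp (-(2 * π * t))‖ < 1 := by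
      rw [Real.norm_eq_abs, abs_of_pos (Real.exp_pos _)]
      apply Real.exp_lt_one_iff.mpr
      have : 0 < 2 * π * t := by positivity
      linarith
    have h0 : HasSum (fun n : ℕ ↦ (n : ℝ) * Real.exp (-(2 * π * t)) ^ n)
        (Real.exp (-(2 * π * t)) / (1 - Real.exp (-(2 * π * t))) ^ 2) :=
      hasSum_coe_mul_geometric_of_norm_lt_one hx
    have h1 := h0.map (Complex.ofRealHom) Complex.continuous_ofReal
    refine h1.congr_fun fun n ↦ ?_
    show ((n : ℂ) * _ : ℂ) = ((((n : ℝ) * Real.exp (-(2 * π * t)) ^ n) : ℝ) : ℂ)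
    rw [← Real.exp_nat_mul, show (n : ℝ) * -(2 * π * t) = -(2 * π * n) * t by ring]
    push_cast
    ring
  have h_sum : Summable fun n : ℕ ↦ ‖(n : ℂ)‖ / (2 * π * n) ^ z.re := by
    have : Summable fun n : ℕ ↦ (2 * π) ^ (-z.re) * (n : ℝ) ^ (1 - z.re) :=
      (Real.summable_nat_rpow.mpr (by linarith)).mul_left _
    refine this.congr fun n ↦ ?_
    rcases Nat.eq_zero_or_pos n with rfl | hn
    · simp [Real.zero_rpow (by intro h; rw [sub_eq_zero] at h; linarith : 1 - z.re ≠ 0)]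
    have hn' : (0 : ℝ) < n := by exact_mod_cast hn
    rw [Complex.norm_natCast, Real.mul_rpow (by positivity) hn'.le,
      Real.rpow_neg (by positivity), Real.rpow_sub hn', Real.rpow_one]
    field_simp
  have hp : ∀ n : ℕ, (n : ℂ) = 0 ∨ 0 < 2 * π * n := by
    intro n
    rcases Nat.eq_zero_or_pos n with rfl | hn
    · exact Or.inl (by simp)
    · refine Or.inr ?_
      have h : (0:ℝ) < n := by exact_mod_cast hn
      positivity
  have key := hasSum_mellin hp hz0 hF h_sum
  have hmel : mellin F z = ∫ u in Set.Ioi (0 : ℝ), (u : ℂ) ^ (z - 1) * F u := by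
    simp [mellin, smul_eq_mul]
  rw [← hmel]
  rw [← key.tsum_eq]
  have hterm : ∀ n : ℕ, Complex.Gamma z * (n : ℂ) / ((2 * π * n : ℝ) : ℂ) ^ z
      = Complex.Gamma z * (2 * (π : ℂ)) ^ (-z) * (1 / (n : ℂ) ^ (z - 1)) := by
    intro n
    rcases Nat.eq_zero_or_pos n with rfl | hn
    · simp [Complex.zero_cpow hz1ne]
    have hn' : (0 : ℝ) < n := by exact_mod_cast hn
    have hne : (n : ℂ) ≠ 0 := by exact_mod_cast hn'.ne'
    have h2 : ((2 * π * n : ℝ) : ℂ) ^ z = ((2 * π : ℝ) : ℂ) ^ z * ((n : ℝ) : ℂ) ^ z := by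
      rw [mul_assoc, show ((2 * (π * n) : ℝ) : ℂ) = ((2 * π : ℝ) : ℂ) * ((n : ℝ) : ℂ) by
        push_cast; ring]
      exact Complex.mul_cpow_ofReal_nonneg (a := 2*π) (b := (n:ℝ)) (by positivity) hn'.le z
    have h3 : ((n : ℝ) : ℂ) ^ z = (n : ℂ) ^ (z - 1) * (n : ℂ) := by
      rw [show ((n : ℝ) : ℂ) = (n : ℂ) by push_cast; rfl,
        show z = z - 1 + 1 by ring, Complex.cpow_add _ _ hne, Complex.cpow_one]
      ring_nf
    have h2pi : ((2 * π : ℝ) : ℂ) = 2 * (π : ℂ) := by push_cast; rfl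
    have hcne : (2 * (π : ℂ)) ^ z ≠ 0 := by
      rw [Ne, Complex.cpow_eq_zero_iff, not_and_or]
      left
      simp [Complex.ofReal_ne_zero, Real.pi_ne_zero]
    have hnzne : (n : ℂ) ^ (z - 1) ≠ 0 := by
      intro h
      rw [Complex.cpow_eq_zero_iff] at h
      exact hne h.1
    rw [h2, h3, h2pi, Complex.cpow_neg]
    field_simp
  rw [tsum_congr hterm, tsum_mul_left, zeta_eq_tsum_one_div_nat_cpow (by simp [Complex.sub_re]; linarith)]
end

section
/- For every z ∈ ℂ with Re z > 1 one has ∫₀^∞ u^{z−1} · u·e^{−2πu}/(1 − e^{−2πu})² du = Γ(z) · z · (2π)^{−(z+1)} · ζ(z). -/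
open Real Set MeasureTheory

/-- The Mellin transform identity `∫₀^∞ u^{z-1} · u e^{-2πu}/(1-e^{-2πu})² du
  = Γ(z) z (2π)^{-(z+1)} ζ(z)` for `Re z > 1`. -/
theorem mellin_g_two_tilde (z : ℂ) (hz : 1 < z.re) :
    ∫ u in Set.Ioi (0 : ℝ),
        (u : ℂ) ^ (z - 1) *
          ((u * Real.exp (-(2 * π * u)) / (1 - Real.exp (-(2 * π * u))) ^ 2 : ℝ) : ℂ)
      = Complex.Gamma z * z * (2 * (π : ℂ)) ^ (-(z + 1)) * riemannZeta z := by
  have hz0 : z ≠ 0 := by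
    intro h
    rw [h] at hz
    simp [Complex.zero_re] at hz
    linarith
  have h2pi : (0 : ℝ) < 2 * π := by positivity
  set F : ℝ → ℂ := fun t ↦
    ((Real.exp (-(2 * π * t)) / (1 - Real.exp (-(2 * π * t))) ^ 2 : ℝ) : ℂ) with hF_def
  set p : ℕ → ℝ := fun n ↦ 2 * π * n with hp_def
  set a : ℕ → ℂ := fun n ↦ (n : ℂ) with ha_def
  have hs1 : 0 < (z + 1).re := by
    simp only [Complex.add_re, Complex.one_re]; linarith
  have hxre : (z + 1).re = z.re + 1 := by
    simp [Complex.add_re, Complex.one_re]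
  have hp : ∀ n : ℕ, a n = 0 ∨ 0 < p n := by
    intro n
    rcases Nat.eq_zero_or_pos n with h | h
    · exact Or.inl (by simp [ha_def, h])
    · exact Or.inr (by positivity)
  -- the series expansion
  have hF : ∀ t ∈ Ioi (0 : ℝ), HasSum (fun n : ℕ ↦ a n * Real.exp (-p n * t)) (F t) := by
    intro t ht
    have ht : (0 : ℝ) < t := ht
    have hr : ‖Real.exp (-(2 * π * t))‖ < 1 := by
      rw [Real.norm_eq_abs, abs_of_pos (Real.exp_pos _)]
      have h1 : Real.exp (-(2 * π * t)) < Real.exp 0 :=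
        Real.exp_lt_exp.mpr (by nlinarith)
      simpa using h1
    have h := hasSum_coe_mul_geometric_of_norm_lt_one (𝕜 := ℝ) hr
    have h2 : HasSum (fun n : ℕ ↦ ((n * Real.exp (-(2 * π * t)) ^ n : ℝ) : ℂ)) (F t) :=
      Complex.ofRealCLM.hasSum h
    refine h2.congr_fun fun n ↦ ?_
    have he : Real.exp (-p n * t) = Real.exp (-(2 * π * t)) ^ n := by
      rw [← Real.exp_nat_mul, hp_def]
      ring_nf
    rw [he, ha_def]
    push_cast
    ring
  -- summability of norms
  have h_sum : Summable fun n : ℕ ↦ ‖a n‖ / (p n) ^ (z + 1).re := by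
    have hsum : Summable fun n : ℕ ↦ (n : ℝ) ^ (-z.re) :=
      (Real.summable_nat_rpow (p := -z.re)).mpr (by linarith)
    refine (hsum.mul_left (((2 * π) ^ (z.re + 1))⁻¹)).congr fun n ↦ ?_
    rcases Nat.eq_zero_or_pos n with h | h
    · have hne : -z.re ≠ 0 := ne_of_lt (by linarith)
      have hne2 : (z + 1).re ≠ 0 := by rw [hxre]; positivity
      simp [ha_def, hp_def, h, Real.zero_rpow hne, Real.zero_rpow hne2]
    · have hn : (0 : ℝ) < n := by exact_mod_cast h
      have hA : (0 : ℝ) < (2 * π) ^ (z.re + 1) := Real.rpow_pos_of_pos h2pi _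
      have hN : (0 : ℝ) < (n : ℝ) ^ (z.re + 1) := Real.rpow_pos_of_pos hn _
      have key : (n : ℝ) ^ (-z.re) * (n : ℝ) ^ (z.re + 1) = n := by
        rw [← Real.rpow_add hn]
        norm_num
      rw [hp_def, ha_def]
      simp only [Complex.norm_natCast]
      rw [hxre, Real.mul_rpow h2pi.le hn.le]
      calc ((2 * π) ^ (z.re + 1))⁻¹ * (n : ℝ) ^ (-z.re)
          = (n : ℝ) ^ (-z.re) / (2 * π) ^ (z.re + 1) := by
            rw [mul_comm, div_eq_mul_inv]
        _ = ((n : ℝ) ^ (-z.re) * (n : ℝ) ^ (z.re + 1)) /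
              ((2 * π) ^ (z.re + 1) * (n : ℝ) ^ (z.re + 1)) := by
            rw [mul_div_mul_right _ _ hN.ne']
        _ = (n : ℝ) / ((2 * π) ^ (z.re + 1) * (n : ℝ) ^ (z.re + 1)) := by rw [key]
  have hM := hasSum_mellin hp hs1 hF h_sum
  -- identify the Mellin transform with the given integral
  have hInt : mellin F (z + 1)
      = ∫ u in Set.Ioi (0 : ℝ), (u : ℂ) ^ (z - 1) *
          ((u * Real.exp (-(2 * π * u)) / (1 - Real.exp (-(2 * π * u))) ^ 2 : ℝ) : ℂ) := by
    rw [mellin]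
    refine setIntegral_congr_fun measurableSet_Ioi fun t ht ↦ ?_
    have ht : (0 : ℝ) < t := ht
    have ht0 : (t : ℂ) ≠ 0 := by exact_mod_cast ht.ne'
    rw [smul_eq_mul, hF_def]
    push_cast
    rw [show (z + 1 - 1 : ℂ) = (z - 1) + 1 by ring, Complex.cpow_add _ _ ht0, Complex.cpow_one]
    field_simp
  -- the Dirichlet series side
  have hζ : HasSum (fun n : ℕ ↦ 1 / (n : ℂ) ^ z) (riemannZeta z) := by
    have hsum := (Complex.summable_one_div_nat_cpow.mpr hz).hasSum
    rwa [← zeta_eq_tsum_one_div_nat_cpow hz] at hsum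
  have hS : HasSum (fun n : ℕ ↦ Complex.Gamma (z + 1) * a n / ((p n : ℝ) : ℂ) ^ (z + 1))
      (Complex.Gamma z * z * (2 * (π : ℂ)) ^ (-(z + 1)) * riemannZeta z) := by
    have h2 := hζ.mul_left (Complex.Gamma (z + 1) * (2 * (π : ℂ)) ^ (-(z + 1)))
    have hval : Complex.Gamma (z + 1) * (2 * (π : ℂ)) ^ (-(z + 1)) * riemannZeta z
        = Complex.Gamma z * z * (2 * (π : ℂ)) ^ (-(z + 1)) * riemannZeta z := by
      rw [Complex.Gamma_add_one z hz0]; ring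
    rw [hval] at h2
    refine h2.congr_fun fun n ↦ ?_
    rcases Nat.eq_zero_or_pos n with h | h
    · simp [ha_def, hp_def, h, Complex.zero_cpow hz0]
    · have hn : (0 : ℝ) < n := by exact_mod_cast h
      have hn0 : ((n : ℕ) : ℂ) ≠ 0 := by exact_mod_cast h.ne'
      rw [hp_def, ha_def]
      have hb : (((2 * π * n : ℝ)) : ℂ) = ((2 * π : ℝ) : ℂ) * ((n : ℝ) : ℂ) := by
        push_cast; ring
      rw [hb, Complex.mul_cpow_ofReal_nonneg h2pi.le hn.le]
      push_cast
      rw [show ((n : ℂ)) ^ (z + 1) = (n : ℂ) ^ z * (n : ℂ) by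
        rw [Complex.cpow_add _ _ hn0, Complex.cpow_one]]
      have hnz : ((n : ℂ)) ^ z ≠ 0 := by
        rw [Ne, Complex.cpow_eq_zero_iff]
        push_neg
        intro h'; exact absurd h' hn0
      have h2p0 : (2 * (π : ℂ)) ≠ 0 := by
        have : ((2 * π : ℝ) : ℂ) ≠ 0 := by exact_mod_cast h2pi.ne'
        push_cast at this; exact this
      have h2pz : ((2 * (π : ℂ))) ^ (z + 1) ≠ 0 := by
        rw [Ne, Complex.cpow_eq_zero_iff]
        push_neg
        intro h'; exact absurd h' h2p0
      rw [Complex.cpow_neg]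
      field_simp
  rw [← hInt]
  exact hM.unique hS
end

section
/- For every z ∈ ℂ with Re z > 2 one has ∫₀^∞ u^{z−1} · u·e^{−2πu}/(1 − e^{−2πu})³ du = Γ(z) · z · (2π)^{−(z+1)} · (ζ(z−1) + ζ(z))/2. -/
open Real Set MeasureTheory

open Complex in
lemma aux_hasSum_mellin_g3 (z : ℂ) (hz : 2 < z.re) :
    HasSum (fun n : ℕ ↦ Complex.Gamma (z + 1) * (((n : ℂ) + 1) * ((n : ℂ) + 2) / 2) /
        ((2 * π * (n + 1) : ℝ) : ℂ) ^ (z + 1))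
      (mellin (fun u : ℝ ↦ ((Real.exp (-(2 * π * u)) /
        (1 - Real.exp (-(2 * π * u))) ^ 3 : ℝ) : ℂ)) (z + 1)) := by
  apply hasSum_mellin (a := fun n : ℕ ↦ ((n : ℂ) + 1) * ((n : ℂ) + 2) / 2)
      (p := fun n : ℕ ↦ 2 * π * (n + 1))
  · intro n
    right
    positivity
  · simp only [Complex.add_re, Complex.one_re]; linarith
  · intro t ht
    rw [mem_Ioi] at ht
    set r : ℝ := Real.exp (-(2 * π * t)) with hr
    have hr1 : r < 1 := by
      rw [hr, Real.exp_lt_one_iff]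
      nlinarith [Real.pi_pos]
    have hrnorm : ‖(r : ℂ)‖ < 1 := by
      rw [Complex.norm_real, Real.norm_eq_abs, abs_of_pos (Real.exp_pos _)]
      exact hr1
    have h := (hasSum_choose_mul_geometric_of_norm_lt_one (𝕜 := ℂ) 2 hrnorm).mul_left (r : ℂ)
    have hc' : ∀ n : ℕ, (((n + 2).choose 2 : ℕ) : ℂ) = ((n : ℂ) + 1) * ((n : ℂ) + 2) / 2 := by
      intro n
      rw [Nat.choose_two_right, show n + 2 - 1 = n + 1 from rfl,
        Nat.cast_div (mul_comm (n + 1) (n + 2) ▸ (Nat.even_mul_succ_self (n + 1)).two_dvd)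
          (by norm_num)]
      push_cast
      ring
    have heq : ∀ n : ℕ, (r : ℂ) * ((((n + 2).choose 2 : ℕ) : ℂ) * (r : ℂ) ^ n)
        = ((n : ℂ) + 1) * ((n : ℂ) + 2) / 2 * Real.exp (-(2 * π * ((n : ℝ) + 1)) * t) := by
      intro n
      rw [hc', show Real.exp (-(2 * π * ((n : ℝ) + 1)) * t) = r ^ (n + 1) by
        rw [hr, ← Real.exp_nat_mul]; congr 1; push_cast; ring]
      push_cast
      ring
    rw [funext heq] at h
    convert h using 1
    case e'_6 => push_cast; ring
    all_goals rfl
  · -- summability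
    have hσ : (1 : ℝ) < z.re - 1 := by linarith
    have hbase : Summable (fun n : ℕ ↦ ((n : ℝ) + 1) ^ (-(z.re - 1))) := by
      have h0 := Real.summable_nat_rpow.mpr (show -(z.re - 1) < -1 by linarith)
      refine ((summable_nat_add_iff 1).mpr h0).congr fun n ↦ ?_
      push_cast
      ring_nf
    simp only [Complex.add_re, Complex.one_re]
    apply Summable.of_nonneg_of_le (fun n ↦ by positivity)
      (fun n ↦ ?_) (hbase.mul_left ((2 * π) ^ (-(z.re + 1)) * 2))
    have hn1 : (0 : ℝ) < (n : ℝ) + 1 := by positivity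
    have hnorm : ‖((n : ℂ) + 1) * ((n : ℂ) + 2) / 2‖ = ((n : ℝ) + 1) * ((n : ℝ) + 2) / 2 := by
      rw [show ((n : ℂ) + 1) * ((n : ℂ) + 2) / 2 = ((((n : ℝ) + 1) * ((n : ℝ) + 2) / 2 : ℝ) : ℂ) by
        push_cast; ring]
      rw [Complex.norm_real, Real.norm_eq_abs, abs_of_pos (by positivity)]
    rw [hnorm, Real.mul_rpow (by positivity) (by positivity), div_le_iff₀ (by positivity)]
    have e1 : (2 * π : ℝ) ^ (-(z.re + 1)) * (2 * π) ^ (z.re + 1) = 1 := by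
      rw [← Real.rpow_add (by positivity), show -(z.re + 1) + (z.re + 1) = 0 by ring,
        Real.rpow_zero]
    have e2 : ((n : ℝ) + 1) ^ (-(z.re - 1)) * ((n : ℝ) + 1) ^ (z.re + 1)
        = ((n : ℝ) + 1) ^ (2 : ℕ) := by
      rw [← Real.rpow_add hn1, show -(z.re - 1) + (z.re + 1) = ((2 : ℕ) : ℝ) by push_cast; ring,
        Real.rpow_natCast]
    calc ((n : ℝ) + 1) * ((n : ℝ) + 2) / 2 ≤ ((n : ℝ) + 1) ^ (2 : ℕ) := by nlinarith
      _ ≤ 2 * ((n : ℝ) + 1) ^ (2 : ℕ) := by nlinarith [sq_nonneg ((n : ℝ) + 1)]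
      _ = (2 * π) ^ (-(z.re + 1)) * 2 * ((n : ℝ) + 1) ^ (-(z.re - 1)) *
          ((2 * π) ^ (z.re + 1) * ((n : ℝ) + 1) ^ (z.re + 1)) := by
        rw [show (2 * π : ℝ) ^ (-(z.re + 1)) * 2 * ((n : ℝ) + 1) ^ (-(z.re - 1)) *
            ((2 * π) ^ (z.re + 1) * ((n : ℝ) + 1) ^ (z.re + 1))
          = ((2 * π : ℝ) ^ (-(z.re + 1)) * (2 * π) ^ (z.re + 1)) *
            (2 * (((n : ℝ) + 1) ^ (-(z.re - 1)) * ((n : ℝ) + 1) ^ (z.re + 1))) by ring, e1, e2]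
        ring

set_option maxHeartbeats 1000000 in
/-- The Mellin transform identity `∫₀^∞ u^{z-1} · u e^{-2πu}/(1-e^{-2πu})³ du
  = Γ(z) z (2π)^{-(z+1)} (ζ(z-1)+ζ(z))/2` for `Re z > 2`. -/
theorem mellin_g_three_tilde (z : ℂ) (hz : 2 < z.re) :
    ∫ u in Set.Ioi (0 : ℝ),
        (u : ℂ) ^ (z - 1) *
          ((u * Real.exp (-(2 * π * u)) / (1 - Real.exp (-(2 * π * u))) ^ 3 : ℝ) : ℂ)
      = Complex.Gamma z * z * (2 * (π : ℂ)) ^ (-(z + 1)) *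
          ((riemannZeta (z - 1) + riemannZeta z) / 2) := by
  have key := aux_hasSum_mellin_g3 z hz
  set G : ℝ → ℂ := fun u : ℝ ↦ ((Real.exp (-(2 * π * u)) /
      (1 - Real.exp (-(2 * π * u))) ^ 3 : ℝ) : ℂ) with hG
  -- Step 1: the LHS is `mellin G (z+1)`
  have hLHS : (∫ u in Set.Ioi (0 : ℝ), (u : ℂ) ^ (z - 1) *
      ((u * Real.exp (-(2 * π * u)) / (1 - Real.exp (-(2 * π * u))) ^ 3 : ℝ) : ℂ))
      = mellin G (z + 1) := by
    simp only [mellin, smul_eq_mul, hG]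
    refine setIntegral_congr_fun measurableSet_Ioi (fun u hu ↦ ?_)
    rw [mem_Ioi] at hu
    have hu0 : (u : ℂ) ≠ 0 := by exact_mod_cast hu.ne'
    rw [show z + 1 - 1 = (z - 1) + 1 by ring, Complex.cpow_add _ _ hu0, Complex.cpow_one]
    push_cast
    ring
  -- Step 2: the Dirichlet series sums to the RHS
  have hz0 : z ≠ 0 := by
    intro h; rw [h] at hz; simp at hz; linarith
  have hs1 : Summable (fun n : ℕ ↦ 1 / ((n : ℂ) + 1) ^ (z - 1)) := by
    have h0 := Complex.summable_one_div_nat_cpow.mpr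
      (show 1 < (z - 1).re by rw [Complex.sub_re, Complex.one_re]; linarith)
    refine ((summable_nat_add_iff 1).mpr h0).congr fun n ↦ ?_
    push_cast
    ring_nf
  have hs2 : Summable (fun n : ℕ ↦ 1 / ((n : ℂ) + 1) ^ z) := by
    have h0 := Complex.summable_one_div_nat_cpow.mpr (show 1 < z.re by linarith)
    refine ((summable_nat_add_iff 1).mpr h0).congr fun n ↦ ?_
    push_cast
    ring_nf
  have h1 : HasSum (fun n : ℕ ↦ 1 / ((n : ℂ) + 1) ^ (z - 1)) (riemannZeta (z - 1)) := by
    rw [zeta_eq_tsum_one_div_nat_add_one_cpow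
      (by rw [Complex.sub_re, Complex.one_re]; linarith)]
    exact hs1.hasSum
  have h2 : HasSum (fun n : ℕ ↦ 1 / ((n : ℂ) + 1) ^ z) (riemannZeta z) := by
    rw [zeta_eq_tsum_one_div_nat_add_one_cpow (by linarith)]
    exact hs2.hasSum
  set C : ℂ := Complex.Gamma (z + 1) * (2 * (π : ℂ)) ^ (-(z + 1)) / 2 with hC
  have hsum2 : HasSum (fun n : ℕ ↦ C * (1 / ((n : ℂ) + 1) ^ (z - 1) + 1 / ((n : ℂ) + 1) ^ z))
      (C * (riemannZeta (z - 1) + riemannZeta z)) := (h1.add h2).mul_left C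
  have hfun : ∀ n : ℕ, Complex.Gamma (z + 1) * (((n : ℂ) + 1) * ((n : ℂ) + 2) / 2) /
      ((2 * π * (n + 1) : ℝ) : ℂ) ^ (z + 1)
      = C * (1 / ((n : ℂ) + 1) ^ (z - 1) + 1 / ((n : ℂ) + 1) ^ z) := by
    intro n
    have hN : ((n : ℂ) + 1) ≠ 0 := Nat.cast_add_one_ne_zero n
    have hNz : ((n : ℂ) + 1) ^ (z - 1) ≠ 0 := fun h ↦ hN (Complex.cpow_eq_zero_iff _ _ |>.mp h).1
    have h2pi : (2 * (π : ℂ)) ≠ 0 := by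
      simp [Real.pi_ne_zero]
    have h2piz : (2 * (π : ℂ)) ^ (z + 1) ≠ 0 :=
      fun h ↦ h2pi (Complex.cpow_eq_zero_iff _ _ |>.mp h).1
    have e0 : ((2 * π * ((n : ℝ) + 1) : ℝ) : ℂ) ^ (z + 1)
        = (2 * (π : ℂ)) ^ (z + 1) * ((n : ℂ) + 1) ^ (z + 1) := by
      rw [show ((2 * π * ((n : ℝ) + 1) : ℝ) : ℂ) = (((2 * π : ℝ)) : ℂ) * ((((n : ℝ) + 1) : ℝ) : ℂ)
        by push_cast; ring,
        Complex.mul_cpow_ofReal_nonneg (by positivity) (by positivity)]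
      norm_num
    have e3 : ((n : ℂ) + 1) ^ (z + 1) = ((n : ℂ) + 1) ^ (z - 1) * (((n : ℂ) + 1) * ((n : ℂ) + 1)) := by
      rw [show z + 1 = (z - 1) + 1 + 1 by ring, Complex.cpow_add _ _ hN,
        Complex.cpow_add _ _ hN, Complex.cpow_one]
      ring
    have e4 : ((n : ℂ) + 1) ^ z = ((n : ℂ) + 1) ^ (z - 1) * ((n : ℂ) + 1) := by
      conv_lhs => rw [show z = (z - 1) + 1 by ring]
      rw [Complex.cpow_add _ _ hN, Complex.cpow_one]
    have gen : ∀ Γm P A N : ℂ, P ≠ 0 → A ≠ 0 → N ≠ 0 →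
        Γm * (N * (N + 1) / 2) / (P * (A * (N * N)))
          = Γm * P⁻¹ / 2 * (1 / A + 1 / (A * N)) := by
      intro Γm P A N hP hA hNn
      linear_combination (Γm * P⁻¹ * A⁻¹ / 2 * (N * N⁻¹ + 1 + N⁻¹)) * mul_inv_cancel₀ hNn
    rw [show ((n : ℂ) + 2) = ((n : ℂ) + 1) + 1 by ring, e0, e3, e4, hC, Complex.cpow_neg]
    exact gen _ _ _ _ h2piz hNz hN
  have hsum3 : HasSum (fun n : ℕ ↦ Complex.Gamma (z + 1) * (((n : ℂ) + 1) * ((n : ℂ) + 2) / 2) /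
      ((2 * π * (n + 1) : ℝ) : ℂ) ^ (z + 1)) (C * (riemannZeta (z - 1) + riemannZeta z)) := by
    rw [funext hfun]
    exact hsum2
  rw [hLHS, key.unique hsum3, hC, Complex.Gamma_add_one z hz0]
  ring
end

section
/- As u → 0⁺ one has g̃₃(u) = 1/(8π³u²) + 1/(8π²u) + O(u); that is, the function u ↦ g̃₃(u) − 1/(8π³u²) − 1/(8π²u) is O(u) as u tends to 0 from the right (in particular its constant term vanishes). -/
open Real Filter Asymptotics

set_option maxHeartbeats 1000000 in
private lemma gthree_aux (t p r : ℝ) (ht0 : 0 < t) (ht1 : t ≤ 1) (ht6 : (0:ℝ) < t ^ 6)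
    (hr : |r| ≤ t ^ 6) (hr1 : |r| ≤ 1) (hA0 : 0 ≤ 1 - p) (hA1 : 1 - p ≤ 1)
    (hQ : |t ^ 3 * p - (1 + t / 2) * (1 - p) ^ 3| ≤ t ^ 6)
    (hE : Real.exp (-t) = p + r)
    (htp : ∀ n : ℕ, t ^ n ≤ 1) :
    |t ^ 3 * Real.exp (-t) - (1 + t / 2) * (1 - Real.exp (-t)) ^ 3| ≤ 13 * t ^ 6 := by
  have hdec : t ^ 3 * Real.exp (-t) - (1 + t / 2) * (1 - Real.exp (-t)) ^ 3 =
      (t ^ 3 * p - (1 + t / 2) * (1 - p) ^ 3) + t ^ 3 * r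
        + (1 + t / 2) * (3 * (1 - p) ^ 2 * r - 3 * (1 - p) * r ^ 2 + r ^ 3) := by
    rw [hE]; ring
  rw [hdec]
  have hA2 : (1 - p) ^ 2 ≤ 1 := by nlinarith
  have hr2 : |r| ^ 2 ≤ 1 := pow_le_one₀ (abs_nonneg r) hr1
  have h1 : |t ^ 3 * r| ≤ t ^ 6 := by
    rw [abs_mul, abs_pow, abs_of_pos ht0]
    nlinarith [htp 3, abs_nonneg r, pow_nonneg ht0.le 3,
      mul_le_mul (htp 3) hr (abs_nonneg r) zero_le_one]
  have hT1 : |3 * (1 - p) ^ 2 * r| ≤ 3 * t ^ 6 := by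
    rw [abs_mul, abs_of_nonneg (by positivity : (0:ℝ) ≤ 3 * (1 - p) ^ 2)]
    nlinarith [mul_le_mul hA2 hr (abs_nonneg r) zero_le_one, sq_nonneg (1 - p)]
  have hT2 : |3 * (1 - p) * r ^ 2| ≤ 3 * t ^ 6 := by
    rw [abs_mul, abs_of_nonneg (by nlinarith : (0:ℝ) ≤ 3 * (1 - p)), abs_pow]
    nlinarith [mul_le_mul hA1 (mul_le_mul hr1 hr (abs_nonneg r) zero_le_one)
      (by positivity : (0:ℝ) ≤ |r| * |r|) zero_le_one, abs_nonneg r, sq_nonneg (|r|)]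
  have hT3 : |r ^ 3| ≤ t ^ 6 := by
    rw [abs_pow]
    nlinarith [mul_le_mul hr2 hr (abs_nonneg r) zero_le_one, abs_nonneg r]
  have h2 : |3 * (1 - p) ^ 2 * r - 3 * (1 - p) * r ^ 2 + r ^ 3| ≤ 7 * t ^ 6 := by
    calc |3 * (1 - p) ^ 2 * r - 3 * (1 - p) * r ^ 2 + r ^ 3|
        ≤ |3 * (1 - p) ^ 2 * r - 3 * (1 - p) * r ^ 2| + |r ^ 3| := abs_add_le _ _
      _ ≤ |3 * (1 - p) ^ 2 * r| + |3 * (1 - p) * r ^ 2| + |r ^ 3| := by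
          linarith [abs_sub (3 * (1 - p) ^ 2 * r) (3 * (1 - p) * r ^ 2)]
      _ ≤ 7 * t ^ 6 := by linarith
  have h3 : |(1 + t / 2) * (3 * (1 - p) ^ 2 * r - 3 * (1 - p) * r ^ 2 + r ^ 3)|
      ≤ (3 / 2) * (7 * t ^ 6) := by
    calc |(1 + t / 2) * (3 * (1 - p) ^ 2 * r - 3 * (1 - p) * r ^ 2 + r ^ 3)|
        = |1 + t / 2| * |3 * (1 - p) ^ 2 * r - 3 * (1 - p) * r ^ 2 + r ^ 3| := abs_mul _ _
      _ ≤ (3 / 2) * (7 * t ^ 6) := by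
          apply mul_le_mul _ h2 (abs_nonneg _) (by norm_num)
          rw [abs_of_pos (by linarith : (0:ℝ) < 1 + t / 2)]; linarith
  calc |(t ^ 3 * p - (1 + t / 2) * (1 - p) ^ 3) + t ^ 3 * r
        + (1 + t / 2) * (3 * (1 - p) ^ 2 * r - 3 * (1 - p) * r ^ 2 + r ^ 3)|
      ≤ |(t ^ 3 * p - (1 + t / 2) * (1 - p) ^ 3) + t ^ 3 * r|
        + |(1 + t / 2) * (3 * (1 - p) ^ 2 * r - 3 * (1 - p) * r ^ 2 + r ^ 3)| := abs_add_le _ _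
    _ ≤ |t ^ 3 * p - (1 + t / 2) * (1 - p) ^ 3| + |t ^ 3 * r|
        + |(1 + t / 2) * (3 * (1 - p) ^ 2 * r - 3 * (1 - p) * r ^ 2 + r ^ 3)| := by
        linarith [abs_add_le (t ^ 3 * p - (1 + t / 2) * (1 - p) ^ 3) (t ^ 3 * r)]
    _ ≤ 13 * t ^ 6 := by linarith

set_option maxHeartbeats 1000000 in
/-- Key numerator bound: for `0 < t ≤ 1`,
`|t³ e^{-t} - (1 + t/2)(1 - e^{-t})³| ≤ 13 t⁶`. -/
private lemma gthree_num_bound {t : ℝ} (ht0 : 0 < t) (ht1 : t ≤ 1) :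
    |t ^ 3 * Real.exp (-t) - (1 + t / 2) * (1 - Real.exp (-t)) ^ 3| ≤ 13 * t ^ 6 := by
  obtain ⟨p, hp⟩ : ∃ p : ℝ, p = 1 - t + t ^ 2 / 2 - t ^ 3 / 6 + t ^ 4 / 24 - t ^ 5 / 120 :=
    ⟨_, rfl⟩
  obtain ⟨r, hrdef⟩ : ∃ r : ℝ, r = Real.exp (-t) - p := ⟨_, rfl⟩
  have htabs : |(-t)| ≤ 1 := by rw [abs_neg, abs_of_pos ht0]; exact ht1
  have hb := Real.exp_bound htabs (n := 6) (by norm_num)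
  have hsum : ∑ m ∈ Finset.range 6, (-t) ^ m / m.factorial = p := by
    rw [hp]
    simp [Finset.sum_range_succ, Nat.factorial]
    ring
  rw [hsum] at hb
  have ht6 : (0:ℝ) < t ^ 6 := by positivity
  have htp : ∀ n : ℕ, t ^ n ≤ 1 := fun n => pow_le_one₀ ht0.le ht1
  have hr : |r| ≤ t ^ 6 := by
    rw [hrdef]
    refine le_trans hb ?_
    rw [abs_neg, abs_of_pos ht0]
    norm_num [Nat.factorial]
    nlinarith
  have hr1 : |r| ≤ 1 := hr.trans (htp 6)
  have hA0 : 0 ≤ 1 - p := by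
    rw [hp]
    nlinarith [htp 2, htp 3, htp 4, htp 5, pow_pos ht0 2, pow_pos ht0 3, pow_pos ht0 4,
      pow_pos ht0 5]
  have hA1 : 1 - p ≤ 1 := by
    rw [hp]
    nlinarith [htp 2, htp 3, htp 4, htp 5, pow_pos ht0 2, pow_pos ht0 3, pow_pos ht0 4,
      pow_pos ht0 5]
  have hQ : |t ^ 3 * p - (1 + t / 2) * (1 - p) ^ 3| ≤ t ^ 6 := by
    have hfac : t ^ 3 * p - (1 + t / 2) * (1 - p) ^ 3 =
        t ^ 6 * (-(1/24) + (7/120) * t - (23/480) * t ^ 2 + (53/2160) * t ^ 3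
          - (89/8640) * t ^ 4 + (193/57600) * t ^ 5 - (61/69120) * t ^ 6
          + (127/691200) * t ^ 7 - (7/230400) * t ^ 8 + (13/3456000) * t ^ 9
          - (1/3456000) * t ^ 10) := by
      rw [hp]; ring
    rw [hfac, abs_mul, abs_pow, abs_of_pos ht0]
    have hqb : |(-(1/24) + (7/120) * t - (23/480) * t ^ 2 + (53/2160) * t ^ 3
          - (89/8640) * t ^ 4 + (193/57600) * t ^ 5 - (61/69120) * t ^ 6
          + (127/691200) * t ^ 7 - (7/230400) * t ^ 8 + (13/3456000) * t ^ 9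
          - (1/3456000) * t ^ 10)| ≤ 1 := by
      rw [abs_le]
      constructor <;>
        linarith [htp 1, htp 2, htp 3, htp 4, htp 5, htp 6, htp 7, htp 8, htp 9, htp 10,
          pow_nonneg ht0.le 1, pow_nonneg ht0.le 2, pow_nonneg ht0.le 3, pow_nonneg ht0.le 4,
          pow_nonneg ht0.le 5, pow_nonneg ht0.le 6, pow_nonneg ht0.le 7, pow_nonneg ht0.le 8,
          pow_nonneg ht0.le 9, pow_nonneg ht0.le 10]
    exact mul_le_of_le_one_right ht6.le hqb
  have hE : Real.exp (-t) = p + r := by rw [hrdef]; ring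
  exact gthree_aux t p r ht0 ht1 ht6 hr hr1 hA0 hA1 hQ hE htp

set_option maxHeartbeats 1000000 in
/-- As `u → 0⁺`, `g̃₃(u) = u e^{-2πu}/(1-e^{-2πu})³ = 1/(8π³u²) + 1/(8π²u) + O(u)`. -/
theorem g_three_tilde_expansion_at_zero :
    (fun u : ℝ =>
        u * Real.exp (-(2 * π * u)) / (1 - Real.exp (-(2 * π * u))) ^ 3
          - 1 / (8 * π ^ 3 * u ^ 2) - 1 / (8 * π ^ 2 * u))
      =O[nhdsWithin 0 (Set.Ioi (0 : ℝ))] (fun u : ℝ => u) := by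
  have hπ : 0 < π := Real.pi_pos
  rw [isBigO_iff]
  refine ⟨104, ?_⟩
  have hδ : (0:ℝ) < 1 / (2 * π) := by positivity
  filter_upwards [Ioo_mem_nhdsGT_of_mem (Set.left_mem_Ico.2 hδ)] with u hu
  obtain ⟨hu0, hu1⟩ := hu
  obtain ⟨t, htdef⟩ : ∃ t : ℝ, t = 2 * π * u := ⟨_, rfl⟩
  have ht0 : 0 < t := by rw [htdef]; positivity
  have ht1 : t ≤ 1 := by
    rw [htdef]
    rw [lt_div_iff₀ (by positivity : (0:ℝ) < 2 * π)] at hu1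
    linarith
  have hEt : Real.exp (-t) < 1 := by
    rw [Real.exp_lt_one_iff]; linarith
  have hD0 : 0 < 1 - Real.exp (-t) := by linarith
  have hDlb : t / 2 ≤ 1 - Real.exp (-t) := by
    have hexp1 : Real.exp (-t) * (1 + t) ≤ 1 := by
      have h := Real.add_one_le_exp t
      calc Real.exp (-t) * (1 + t) ≤ Real.exp (-t) * Real.exp t := by
            nlinarith [Real.exp_pos (-t)]
        _ = 1 := by rw [← Real.exp_add]; simp
    nlinarith [Real.exp_pos (-t), mul_nonneg ht0.le (sub_nonneg.2 ht1)]
  have hN := gthree_num_bound ht0 ht1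
  have heq : u * Real.exp (-(2 * π * u)) / (1 - Real.exp (-(2 * π * u))) ^ 3
          - 1 / (8 * π ^ 3 * u ^ 2) - 1 / (8 * π ^ 2 * u)
      = (t ^ 3 * Real.exp (-t) - (1 + t / 2) * (1 - Real.exp (-t)) ^ 3)
          / (2 * π * t ^ 2 * (1 - Real.exp (-t)) ^ 3) := by
    rw [htdef]
    have hD0' : (1 : ℝ) - Real.exp (-(2 * π * u)) ≠ 0 := by
      rw [htdef] at hD0; exact ne_of_gt hD0
    have hD3' : (1 : ℝ) - Real.exp (-(u * 2 * π)) ≠ 0 := by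
      rw [show u * 2 * π = 2 * π * u by ring]; exact hD0'
    field_simp
    ring
  rw [Real.norm_eq_abs, Real.norm_eq_abs, heq, abs_div, abs_of_pos hu0]
  have hden : 0 < 2 * π * t ^ 2 * (1 - Real.exp (-t)) ^ 3 := by positivity
  rw [abs_of_pos hden, div_le_iff₀ hden]
  have hD3 : (t / 2) ^ 3 ≤ (1 - Real.exp (-t)) ^ 3 := by
    gcongr
  have hut : 52 / π * t = 104 * u := by rw [htdef]; field_simp; ring
  calc |t ^ 3 * Real.exp (-t) - (1 + t / 2) * (1 - Real.exp (-t)) ^ 3| ≤ 13 * t ^ 6 := hN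
    _ = (52 / π * t) * (2 * π * t ^ 2 * (t / 2) ^ 3) := by field_simp; ring
    _ ≤ (104 * u) * (2 * π * t ^ 2 * (1 - Real.exp (-t)) ^ 3) := by
        rw [hut]
        gcongr
end

section
/- Let n ∈ ℕ. The function F : ℂ → ℂ, F(z) = (2π)^{−z} · (ζ(z−1) + (n/2)·ζ(z) − (z/2)·(ζ(z−1) + ζ(z))), is complex differentiable at z = 0 and its derivative there equals (24·ζ′(−1) + 2·log(2π) + 7)/24, where ζ′(−1) denotes the complex derivative of ζ at −1. -/
open Real Complex Filter

local notation "γ" => Real.eulerMascheroniConstant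

/-- ζ'(0) = -log(2π)/2. -/
lemma hasDerivAt_riemannZeta_zero :
    HasDerivAt riemannZeta (-(Real.log (2 * π) : ℂ) / 2) 0 := by
  set N : ℂ → ℂ := fun s => s * completedRiemannZeta₀ s - s / (1 - s) - 1 with hNdef
  set D : ℂ → ℂ := fun s => 2 * ((π : ℂ) ^ (-s / 2) * Complex.Gamma (s / 2 + 1)) with hDdef
  have hπ0 : (π : ℂ) ≠ 0 := by exact_mod_cast Real.pi_ne_zero
  -- derivative of N at 0
  have hN : HasDerivAt N (completedRiemannZeta₀ 0 - 1) 0 := by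
    have h1 : HasDerivAt (fun s : ℂ => s * completedRiemannZeta₀ s)
        (completedRiemannZeta₀ 0) 0 := by
      have := (hasDerivAt_id (0 : ℂ)).mul
        (differentiable_completedZeta₀ 0).hasDerivAt
      exact this.congr_deriv (by simp)
    have h2 : HasDerivAt (fun s : ℂ => s / (1 - s)) 1 0 := by
      have := (hasDerivAt_id (0 : ℂ)).div ((hasDerivAt_id (0 : ℂ)).const_sub 1)
        (by norm_num)
      exact this.congr_deriv (by simp)
    exact (h1.sub h2).sub_const 1
  -- derivative of D at 0
  have hD : HasDerivAt D (-(Complex.log π) - (γ : ℂ)) 0 := by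
    have hp : HasDerivAt (fun s : ℂ => (π : ℂ) ^ (-s / 2))
        (-(Complex.log π) / 2) 0 := by
      have := ((hasDerivAt_neg (0 : ℂ)).div_const 2).const_cpow (c := (π : ℂ)) (Or.inl hπ0)
      simpa [neg_div, div_eq_mul_inv] using this
    have hg : HasDerivAt (fun s : ℂ => Complex.Gamma (s / 2 + 1)) (-(γ : ℂ) / 2) 0 := by
      have hin : HasDerivAt (fun s : ℂ => s / 2 + 1) (1 / 2 : ℂ) 0 := by
        simpa using ((hasDerivAt_id (0 : ℂ)).div_const 2).add_const 1
      have h1 : HasDerivAt Complex.Gamma (-(γ : ℂ)) ((0 : ℂ) / 2 + 1) := by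
        norm_num [Complex.hasDerivAt_Gamma_one]
      exact (h1.comp 0 hin).congr_deriv (by ring)
    have := (hp.mul hg).const_mul (2 : ℂ)
    refine this.congr_deriv ?_
    simp [Complex.Gamma_one]
    ring
  have hD0 : D 0 = 2 := by simp [hDdef, Complex.Gamma_one]
  -- ζ = N / D near 0
  have heq : riemannZeta =ᶠ[nhds (0 : ℂ)] fun s => N s / D s := by
    filter_upwards [Metric.ball_mem_nhds (0 : ℂ) (by norm_num : (0:ℝ) < 1/2)] with s hs
    have hs2 : ‖s‖ < 1 / 2 := by simpa [Metric.mem_ball] using hs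
    have hs1 : (1 : ℂ) - s ≠ 0 := by
      intro h
      have hs' : s = 1 := by linear_combination -h
      rw [hs'] at hs2
      norm_num at hs2
    rcases eq_or_ne s 0 with rfl | hs0
    · norm_num [riemannZeta_zero, hNdef, hDdef, Complex.Gamma_one]
    · rw [riemannZeta_def_of_ne_zero hs0, completedRiemannZeta_eq, Complex.Gammaℝ_def]
      have hNs : N s = s * (completedRiemannZeta₀ s - 1 / s - 1 / (1 - s)) := by
        rw [hNdef]
        field_simp
        ring
      have hDs : D s = s * ((π : ℂ) ^ (-s / 2) * Complex.Gamma (s / 2)) := by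
        rw [hDdef]
        simp only
        rw [Complex.Gamma_add_one (s / 2) (div_ne_zero hs0 two_ne_zero)]
        ring
      rw [hNs, hDs, mul_div_mul_left _ _ hs0]
  -- combine
  have hquot := hN.div hD (hD0 ▸ two_ne_zero)
  have hζ := hquot.congr_of_eventuallyEq heq
  refine hζ.congr_deriv ?_
  have hΛ0 : completedRiemannZeta₀ 0 = ((γ : ℂ) - Complex.log (4 * (π : ℂ))) / 2 + 1 := by
    rw [show (0 : ℂ) = 1 - 1 by norm_num, completedRiemannZeta₀_one_sub,
      completedRiemannZeta₀_one]
  have hN0 : N 0 = -1 := by simp [hNdef]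
  have hlog4 : Complex.log (4 * (π : ℂ)) = (Real.log (4 * π) : ℂ) := by
    rw [show (4 : ℂ) * (π : ℂ) = ((4 * π : ℝ) : ℂ) by push_cast; ring,
      Complex.ofReal_log (by positivity)]
  have hlogπ : Complex.log (π : ℂ) = (Real.log π : ℂ) := by
    rw [Complex.ofReal_log Real.pi_pos.le]
  have hr : Real.log (4 * π) + Real.log π = 2 * Real.log (2 * π) := by
    rw [← Real.log_mul (by positivity) (by positivity),
      show (4 * π) * π = (2 * π) ^ 2 by ring, Real.log_pow]
    norm_num
  rw [hD0, hN0, hΛ0, hlog4, hlogπ]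
  have hrC : (Real.log (4 * π) : ℂ) + (Real.log π : ℂ) = 2 * (Real.log (2 * π) : ℂ) := by
    exact_mod_cast congrArg (Complex.ofReal) hr
  field_simp
  have hL : (Real.log (π * 2) : ℂ) = Real.log (2 * π) := by rw [mul_comm]
  linear_combination -hrC + 2 * hL

/-- The function `F(z) = (2π)^{-z}(ζ(z-1) + (n/2)ζ(z) - (z/2)(ζ(z-1)+ζ(z)))` is
differentiable at `0` with `F'(0) = (24 ζ'(-1) + 2 log(2π) + 7)/24`. -/
theorem deriv_mellin_combination_alpha_one (n : ℕ) :
    HasDerivAt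
      (fun z : ℂ => (2 * (π : ℂ)) ^ (-z) *
        (riemannZeta (z - 1) + ((n : ℂ) / 2) * riemannZeta z
          - (z / 2) * (riemannZeta (z - 1) + riemannZeta z)))
      ((24 * deriv riemannZeta (-1) + 2 * (Real.log (2 * π) : ℂ) + 7) / 24) 0 := by
  have h2π : (2 * (π : ℂ)) ≠ 0 := by
    simp [Real.pi_ne_zero]
  have hf : HasDerivAt (fun z : ℂ => (2 * (π : ℂ)) ^ (-z))
      (-(Real.log (2 * π) : ℂ)) 0 := by
    have := (hasDerivAt_neg (0 : ℂ)).const_cpow (c := 2 * (π : ℂ)) (Or.inl h2π)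
    refine this.congr_deriv ?_
    rw [show Complex.log (2 * (π : ℂ)) = (Real.log (2 * π) : ℂ) by
      rw [show (2 : ℂ) * (π : ℂ) = ((2 * π : ℝ) : ℂ) by push_cast; ring,
        Complex.ofReal_log (by positivity)]]
    simp
  have hz1 : HasDerivAt (fun z : ℂ => riemannZeta (z - 1)) (deriv riemannZeta (-1)) 0 := by
    have hd : HasDerivAt riemannZeta (deriv riemannZeta (-1)) ((0 : ℂ) - 1) := by
      rw [show (0 : ℂ) - 1 = -1 by norm_num]
      exact (differentiableAt_riemannZeta (by norm_num)).hasDerivAt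
    exact (hd.comp 0 ((hasDerivAt_id (0 : ℂ)).sub_const 1)).congr_deriv (by simp)
  have hz0 := hasDerivAt_riemannZeta_zero
  have hg : HasDerivAt
      (fun z : ℂ => riemannZeta (z - 1) + ((n : ℂ) / 2) * riemannZeta z
        - (z / 2) * (riemannZeta (z - 1) + riemannZeta z))
      (deriv riemannZeta (-1) + ((n : ℂ) / 2) * (-(Real.log (2 * π) : ℂ) / 2)
        - (((1 : ℂ) / 2) * (riemannZeta (0 - 1) + riemannZeta 0)
          + ((0 : ℂ) / 2) * (deriv riemannZeta (-1) + (-(Real.log (2 * π) : ℂ) / 2)))) 0 := by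
    exact (hz1.add (hz0.const_mul _)).sub
      (((hasDerivAt_id (0 : ℂ)).div_const 2).mul (hz1.add hz0))
  have hF := hf.mul hg
  refine hF.congr_deriv ?_
  have hζ0 : riemannZeta (0 : ℂ) = -1 / 2 := riemannZeta_zero
  have hζ1 : riemannZeta ((0 : ℂ) - 1) = -1 / 12 := by
    rw [show (0 : ℂ) - 1 = -(1 : ℕ) by norm_num, riemannZeta_neg_nat_eq_bernoulli']
    norm_num [bernoulli'_two]
  rw [hζ0, hζ1]
  norm_num
  ring
end

section
/- Let n ∈ ℕ and u > 0. Then ∫₀ᵘ (1 − e^{−4πv})^{−n} · (1 − e^{−4π(u−v)})^{−n} · (∫_{ℂⁿ} exp(−(B_{2v} + B_{2(u−v)})·‖Z‖²) dZ) dv = u · (1 − e^{−4πu})^{−n}. -/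
open Real MeasureTheory intervalIntegral

noncomputable instance (n : ℕ) : MeasurableSpace (EuclideanSpace ℂ (Fin n)) := borel _
instance (n : ℕ) : BorelSpace (EuclideanSpace ℂ (Fin n)) := ⟨rfl⟩

lemma gauss_int (n : ℕ) (b : ℝ) (hb : 0 < b) :
    ∫ Z : EuclideanSpace ℂ (Fin n), Real.exp (-(b * ‖Z‖ ^ 2)) = (π / b) ^ n := by
  have := GaussianFourier.integral_rexp_neg_mul_sq_norm (V := EuclideanSpace ℂ (Fin n)) hb
  simp only [neg_mul] at this ⊢
  rw [this]
  have hfr : Module.finrank ℝ (EuclideanSpace ℂ (Fin n)) = 2 * n := by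
    rw [← Module.finrank_mul_finrank ℝ ℂ (EuclideanSpace ℂ (Fin n)),
      Complex.finrank_real_complex, finrank_euclideanSpace, Fintype.card_fin]
  rw [hfr, show ((2*n : ℕ):ℝ)/2 = (n:ℝ) by push_cast; ring, Real.rpow_natCast]

lemma tanh_form (t : ℝ) :
    Real.tanh t = (1 - Real.exp (-(2*t))) / (1 + Real.exp (-(2*t))) := by
  have h1 : Real.exp t * Real.exp (-t) = 1 := by rw [← Real.exp_add]; simp
  have h2 : Real.exp (-(2*t)) = Real.exp (-t) * Real.exp (-t) := by
    rw [← Real.exp_add]; ring_nf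
  have hc : 0 < Real.cosh t := Real.cosh_pos t
  have hd : (0:ℝ) < 1 + Real.exp (-(2*t)) := by positivity
  rw [Real.tanh_eq_sinh_div_cosh, Real.sinh_eq, Real.cosh_eq,
    div_eq_div_iff (by positivity) (ne_of_gt hd)]
  linear_combination Real.exp t * h2 + Real.exp (-t) * h1

/-- Semigroup integral identity for the Mehler kernel:
`∫₀ᵘ (1-e^{-4πv})^{-n} (1-e^{-4π(u-v)})^{-n}
    (∫_{ℂⁿ} exp(-(B_{2v}+B_{2(u-v)})‖Z‖²) dZ) dv = u (1-e^{-4πu})^{-n}`,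
where `B_w = π/(2 tanh(π w))` and `ℂⁿ` carries the Lebesgue (Haar) measure. -/
theorem mehler_semigroup_integral (n : ℕ) (u : ℝ) (hu : 0 < u) :
    (∫ v in (0 : ℝ)..u,
        (1 - Real.exp (-(4 * π * v))) ^ (-(n : ℤ)) *
          (1 - Real.exp (-(4 * π * (u - v)))) ^ (-(n : ℤ)) *
          (∫ Z : EuclideanSpace ℂ (Fin n),
            Real.exp (-((π / (2 * Real.tanh (π * (2 * v)))
              + π / (2 * Real.tanh (π * (2 * (u - v))))) * ‖Z‖ ^ 2))))
      = u * (1 - Real.exp (-(4 * π * u))) ^ (-(n : ℤ)) := by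
  have hne : ∀ᵐ x : ℝ ∂volume, x ≠ u := by
    rw [ae_iff]
    convert Real.volume_singleton (a := u) using 2
    ext x; simp
  rw [intervalIntegral.integral_congr_ae
      (g := fun _ => (1 - Real.exp (-(4 * π * u))) ^ (-(n : ℤ)))]
  · rw [intervalIntegral.integral_const, smul_eq_mul, sub_zero]
  · filter_upwards [hne] with v hvne hv
    rw [Set.uIoc_of_le hu.le] at hv
    obtain ⟨hv0, hvu⟩ := hv
    have hvu' : v < u := lt_of_le_of_ne hvu hvne
    set a := π * (2 * v) with ha_def
    set b := π * (2 * (u - v)) with hb_def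
    have ha : 0 < a := by positivity
    have hb : 0 < b := by
      have : 0 < u - v := by linarith
      positivity
    set x := Real.exp (-(2 * a)) with hx_def
    set y := Real.exp (-(2 * b)) with hy_def
    have hxv : Real.exp (-(4 * π * v)) = x := by rw [hx_def, ha_def]; ring_nf
    have hyv : Real.exp (-(4 * π * (u - v))) = y := by rw [hy_def, hb_def]; ring_nf
    have hxyu : Real.exp (-(4 * π * u)) = x * y := by
      rw [hx_def, hy_def, ← Real.exp_add, ha_def, hb_def]; ring_nf
    have hx0 : 0 < x := Real.exp_pos _
    have hy0 : 0 < y := Real.exp_pos _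
    have hx1 : x < 1 := Real.exp_lt_one_iff.mpr (by linarith)
    have hy1 : y < 1 := Real.exp_lt_one_iff.mpr (by linarith)
    have hx1' : (0:ℝ) < 1 - x := by linarith
    have hy1' : (0:ℝ) < 1 - y := by linarith
    have hxy1 : (0:ℝ) < 1 - x * y := by nlinarith
    set c := π / (2 * Real.tanh a) + π / (2 * Real.tanh b) with hc_def
    have hxne : (1:ℝ) + x ≠ 0 := by positivity
    have hyne : (1:ℝ) + y ≠ 0 := by positivity
    have hc : c = π * (1 - x * y) / ((1 - x) * (1 - y)) := by
      rw [hc_def, tanh_form a, tanh_form b, ← hx_def, ← hy_def]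
      field_simp
      ring
    have hcpos : 0 < c := by rw [hc]; positivity
    rw [hxv, hyv, hxyu, gauss_int n c hcpos]
    have key : (1 - x)⁻¹ * (1 - y)⁻¹ * (π / c) = (1 - x * y)⁻¹ := by
      rw [hc]
      field_simp
    calc (1 - x) ^ (-(n:ℤ)) * (1 - y) ^ (-(n:ℤ)) * (π / c) ^ n
        = ((1 - x)⁻¹ * (1 - y)⁻¹ * (π / c)) ^ n := by
          simp [zpow_neg, zpow_natCast, mul_pow, inv_pow]
      _ = ((1 - x * y)⁻¹) ^ n := by rw [key]
      _ = (1 - x * y) ^ (-(n:ℤ)) := by simp [zpow_neg, zpow_natCast, inv_pow]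
end

section
/- Let n ∈ ℕ with n ≥ 1, let j be an index in {1,…,n}, and let u > 0. Then ∫₀ᵘ (1 − e^{−4πv})^{−n} · (1 − e^{−4π(u−v)})^{−n} · (∫_{ℂⁿ} |Z_j|² · exp(−(B_{2v} + B_{2(u−v)})·‖Z‖²) dZ) dv = (π·(1 − e^{−4πu})^{n+1})^{−1} · (u + u·e^{−4πu} − (1 − e^{−4πu})/(2π)). -/
open Real MeasureTheory intervalIntegral

set_option maxHeartbeats 1000000


lemma moment1d {c : ℝ} (hc : 0 < c) :
    ∫ y : ℝ, y ^ 2 * Real.exp (-(c * y ^ 2)) = c ^ (-(3:ℝ)/2) * (Real.sqrt π / 2) := by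
  have h1 : ∫ y : ℝ, y ^ 2 * Real.exp (-(c * y ^ 2))
      = 2 * ∫ y in Set.Ioi (0:ℝ), y ^ 2 * Real.exp (-(c * y ^ 2)) := by
    rw [← integral_comp_abs (f := fun y => y ^ 2 * Real.exp (-(c * y ^ 2)))]
    congr 1 with y
    rw [sq_abs]
  have h2 := integral_rpow_mul_exp_neg_mul_rpow (p := 2) (q := 2) (b := c)
    (by norm_num) (by norm_num) hc
  simp only [Real.rpow_two, neg_mul] at h2
  have hG : Real.Gamma ((2 + 1) / 2) = Real.sqrt π / 2 := by
    rw [show ((2:ℝ) + 1) / 2 = 1/2 + 1 by norm_num, Real.Gamma_add_one (by norm_num),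
      Real.Gamma_one_half_eq]
    ring
  rw [h1, h2, hG, show (-((2:ℝ)+1)/2) = -(3:ℝ)/2 by norm_num]
  ring

lemma pi_moment (n : ℕ) (j : Fin n) {c : ℝ} (hc : 0 < c) :
    (∫ y : ((_ : Fin n) × Fin 2) → ℝ,
        (y ⟨j, 0⟩ ^ 2 + y ⟨j, 1⟩ ^ 2) * Real.exp (-(c * ∑ s, y s ^ 2)))
      = π ^ n / c ^ (n + 1) := by
  classical
  set ι := ((_ : Fin n) × Fin 2) with hι
  set M : ℝ := c ^ (-(3:ℝ)/2) * (Real.sqrt π / 2) with hM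
  set G : ℝ := Real.sqrt (π / c) with hG
  have hGpos : 0 < G := Real.sqrt_pos.mpr (div_pos pi_pos hc)
  have hsplit : ∀ (a : ι) (y : ι → ℝ), y a ^ 2 * Real.exp (-(c * ∑ s, y s ^ 2))
      = ∏ s : ι, ((if s = a then y s ^ 2 else 1) * Real.exp (-(c * y s ^ 2))) := by
    intro a y
    rw [Finset.prod_mul_distrib, Finset.prod_ite_eq' Finset.univ a (fun s => y s ^ 2),
      ← Real.exp_sum]
    simp [Finset.mul_sum]
  have hint1 : Integrable fun t : ℝ => t ^ 2 * Real.exp (-(c * t ^ 2)) := by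
    have := integrable_rpow_mul_exp_neg_mul_sq hc (s := 2) (by norm_num)
    simpa [Real.rpow_two, neg_mul] using this
  have hint2 : Integrable fun t : ℝ => Real.exp (-(c * t ^ 2)) := by
    simpa [neg_mul] using integrable_exp_neg_mul_sq hc
  have hintF : ∀ a s : ι,
      Integrable fun t : ℝ => (if s = a then t ^ 2 else 1) * Real.exp (-(c * t ^ 2)) := by
    intro a s
    split_ifs with h
    · exact hint1
    · simpa using hint2
  have hterm : ∀ a : ι, (∫ y : ι → ℝ, y a ^ 2 * Real.exp (-(c * ∑ s, y s ^ 2)))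
      = (M / G) * G ^ (2 * n) := by
    intro a
    simp_rw [hsplit a]
    rw [volume_pi, MeasureTheory.integral_fintype_prod_eq_prod
      (fun s t => (if s = a then t ^ 2 else 1) * Real.exp (-(c * t ^ 2)))]
    have hfac : ∀ s : ι, (∫ t : ℝ, (if s = a then t ^ 2 else 1) * Real.exp (-(c * t ^ 2)))
        = (if s = a then M / G else 1) * G := by
      intro s
      split_ifs with h
      · rw [div_mul_cancel₀ _ (ne_of_gt hGpos), hM]
        exact moment1d hc
      · simp only [one_mul]
        simpa [neg_mul, hG] using integral_gaussian c
    simp_rw [hfac]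
    rw [Finset.prod_mul_distrib, Finset.prod_ite_eq' Finset.univ a (fun _ => M / G),
      Finset.prod_const]
    simp [hι, Fintype.card_sigma, mul_comm]
  have hadd : (∫ y : ι → ℝ, (y ⟨j, 0⟩ ^ 2 + y ⟨j, 1⟩ ^ 2) * Real.exp (-(c * ∑ s, y s ^ 2)))
      = (∫ y : ι → ℝ, y ⟨j, 0⟩ ^ 2 * Real.exp (-(c * ∑ s, y s ^ 2)))
        + ∫ y : ι → ℝ, y ⟨j, 1⟩ ^ 2 * Real.exp (-(c * ∑ s, y s ^ 2)) := by
    simp_rw [add_mul]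
    rw [MeasureTheory.integral_add]
    · simp_rw [hsplit ⟨j, 0⟩]; exact Integrable.fintype_prod (fun s => hintF _ s)
    · simp_rw [hsplit ⟨j, 1⟩]; exact Integrable.fintype_prod (fun s => hintF _ s)
  rw [hadd, hterm, hterm]
  -- now pure computation
  have hG2 : G ^ 2 = π / c := Real.sq_sqrt (le_of_lt (div_pos pi_pos hc))
  have hMG : M / G = c⁻¹ / 2 := by
    have hkey : c ^ (-(3:ℝ)/2) * c ^ ((1:ℝ)/2) = c⁻¹ := by
      rw [← Real.rpow_add hc, show -(3:ℝ)/2 + 1/2 = -1 by norm_num, Real.rpow_neg_one]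
    have hs : Real.sqrt π ≠ 0 := ne_of_gt (Real.sqrt_pos.mpr pi_pos)
    have hcr : c ^ ((1:ℝ)/2) ≠ 0 := by positivity
    rw [hM, hG, Real.sqrt_div pi_pos.le, Real.sqrt_eq_rpow c, ← hkey]
    field_simp
  rw [hMG, pow_mul, hG2, div_pow]
  field_simp
  ring

lemma inner_gauss (n : ℕ) (j : Fin n) {c : ℝ} (hc : 0 < c) :
    (∫ Z : EuclideanSpace ℂ (Fin n), ‖Z j‖ ^ 2 * Real.exp (-(c * ‖Z‖ ^ 2)))
      = π ^ n / c ^ (n + 1) := by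
  classical
  set ι := ((_ : Fin n) × Fin 2) with hι
  let b : OrthonormalBasis ι ℝ (EuclideanSpace ℂ (Fin n)) :=
    Pi.orthonormalBasis fun _ => Complex.orthonormalBasisOneI
  have h1 : (∫ Z : EuclideanSpace ℂ (Fin n), ‖Z j‖ ^ 2 * Real.exp (-(c * ‖Z‖ ^ 2)))
      = ∫ x : EuclideanSpace ℝ ι,
          ‖b.repr.symm x j‖ ^ 2 * Real.exp (-(c * ‖b.repr.symm x‖ ^ 2)) :=
    (b.measurePreserving_repr_symm.integral_comp
      (MeasurableEquiv.measurableEmbedding b.measurableEquiv.symm) _).symm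
  have key : ∀ x : EuclideanSpace ℝ ι,
      ‖b.repr.symm x j‖ ^ 2 * Real.exp (-(c * ‖b.repr.symm x‖ ^ 2))
      = (x ⟨j, 0⟩ ^ 2 + x ⟨j, 1⟩ ^ 2) * Real.exp (-(c * ∑ s : ι, x s ^ 2)) := by
    intro x
    have hnorm : ‖b.repr.symm x‖ = ‖x‖ := b.repr.symm.norm_map x
    have hsum : ‖x‖ ^ 2 = ∑ s : ι, x s ^ 2 := by
      rw [EuclideanSpace.norm_eq, Real.sq_sqrt (by positivity)]
      simp [Real.norm_eq_abs, sq_abs]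
    have hx : b.repr (b.repr.symm x) = x := b.repr.apply_symm_apply x
    have hcoord : ∀ (k : Fin 2), (Complex.orthonormalBasisOneI.repr ((b.repr.symm x) j)) k
        = x ⟨j, k⟩ := by
      intro k
      calc Complex.orthonormalBasisOneI.repr ((b.repr.symm x) j) k
          = b.repr (b.repr.symm x) ⟨j, k⟩ := rfl
        _ = x ⟨j, k⟩ := by rw [hx]
    have h0 := hcoord 0
    have h1' := hcoord 1
    simp only [Complex.orthonormalBasisOneI_repr_apply] at h0 h1'
    norm_num at h0 h1'
    have hZj : ‖b.repr.symm x j‖ ^ 2 = x ⟨j, 0⟩ ^ 2 + x ⟨j, 1⟩ ^ 2 := by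
      rw [← h0, ← h1']
      rw [Complex.sq_norm, Complex.normSq_apply]; ring
    rw [hZj, hnorm, hsum]
  rw [h1]
  simp_rw [key]
  -- move to Pi measure
  rw [← ((EuclideanSpace.volume_preserving_symm_measurableEquiv_toLp ι).symm).integral_comp
    (MeasurableEquiv.measurableEmbedding _)]
  have hco : ∀ (y : ι → ℝ) (s : ι),
      ((MeasurableEquiv.toLp 2 (ι → ℝ)).symm.symm y) s = y s := fun _ _ => rfl
  simp_rw [hco]
  exact pi_moment n j hc

lemma one_sub_exp (t : ℝ) :
    1 - Real.exp (-(4 * π * t)) = Real.exp (-(2 * π * t)) * (2 * Real.sinh (2 * π * t)) := by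
  have h1 : Real.exp (-(2*π*t)) * Real.exp (2*π*t) = 1 := by
    rw [← Real.exp_add]; norm_num
  have h2 : Real.exp (-(2*π*t)) * Real.exp (-(2*π*t)) = Real.exp (-(4*π*t)) := by
    rw [← Real.exp_add]; ring_nf
  rw [Real.sinh_eq]
  linear_combination h2 - h1

/-- Moment integral identity for the Mehler kernel:
`∫₀ᵘ (1-e^{-4πv})^{-n} (1-e^{-4π(u-v)})^{-n}
    (∫_{ℂⁿ} |Z_j|² exp(-(B_{2v}+B_{2(u-v)})‖Z‖²) dZ) dv
  = (π (1-e^{-4πu})^{n+1})⁻¹ (u + u e^{-4πu} - (1-e^{-4πu})/(2π))`,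
where `B_w = π/(2 tanh(π w))` and `ℂⁿ` carries the Lebesgue (Haar) measure. -/
theorem mehler_second_moment_integral (n : ℕ) (hn : 1 ≤ n) (j : Fin n)
    (u : ℝ) (hu : 0 < u) :
    (∫ v in (0 : ℝ)..u,
        (1 - Real.exp (-(4 * π * v))) ^ (-(n : ℤ)) *
          (1 - Real.exp (-(4 * π * (u - v)))) ^ (-(n : ℤ)) *
          (∫ Z : EuclideanSpace ℂ (Fin n),
            ‖Z j‖ ^ 2 *
              Real.exp (-((π / (2 * Real.tanh (π * (2 * v)))
                + π / (2 * Real.tanh (π * (2 * (u - v))))) * ‖Z‖ ^ 2))))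
      = (π * (1 - Real.exp (-(4 * π * u))) ^ (n + 1))⁻¹ *
          (u + u * Real.exp (-(4 * π * u)) - (1 - Real.exp (-(4 * π * u))) / (2 * π)) := by
  have hπ := pi_pos
  set S := Real.sinh (2 * π * u) with hSdef
  have hS : 0 < S := Real.sinh_pos_iff.mpr (by positivity)
  set K : ℝ := Real.exp (2 * π * u) ^ n / (2 ^ n * π * S ^ (n + 1)) with hK
  have hcongr : Set.EqOn
      (fun v => (1 - Real.exp (-(4 * π * v))) ^ (-(n : ℤ)) *
          (1 - Real.exp (-(4 * π * (u - v)))) ^ (-(n : ℤ)) *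
          (∫ Z : EuclideanSpace ℂ (Fin n),
            ‖Z j‖ ^ 2 *
              Real.exp (-((π / (2 * Real.tanh (π * (2 * v)))
                + π / (2 * Real.tanh (π * (2 * (u - v))))) * ‖Z‖ ^ 2))))
      (fun v => K * (Real.cosh (2 * π * u) - Real.cosh (2 * π * (2 * v - u))))
      (Set.uIcc 0 u) := by
    intro v hv
    rw [Set.uIcc_of_le hu.le] at hv
    have hnne : -(n : ℤ) ≠ 0 := by
      simpa using (by omega : n ≠ 0)
    dsimp only
    rcases eq_or_lt_of_le hv.1 with rfl | hv0
    · rw [show -(4*π*(0:ℝ)) = 0 by ring, Real.exp_zero, sub_self, zero_zpow _ hnne,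
        show 2*π*(2*(0:ℝ)-u) = -(2*π*u) by ring, Real.cosh_neg]
      ring
    rcases eq_or_lt_of_le hv.2 with rfl | hvu
    · rw [show -(4*π*(v-v)) = 0 by ring, Real.exp_zero, sub_self, zero_zpow _ hnne,
        show 2*π*(2*v-v) = 2*π*v by ring]
      ring
    -- interior case
    have hw : 0 < u - v := by linarith
    set s1 := Real.sinh (2*π*v) with hs1def
    set s2 := Real.sinh (2*π*(u-v)) with hs2def
    have hs1 : 0 < s1 := Real.sinh_pos_iff.mpr (by positivity)
    have hs2 : 0 < s2 := Real.sinh_pos_iff.mpr (by positivity)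
    have hc1 : 0 < Real.cosh (2*π*v) := Real.cosh_pos _
    have hc2 : 0 < Real.cosh (2*π*(u-v)) := Real.cosh_pos _
    have hsum : s1 * Real.cosh (2*π*(u-v)) + Real.cosh (2*π*v) * s2 = S := by
      rw [hs1def, hs2def, ← Real.sinh_add, hSdef]
      congr 1
      ring
    have hcval : π / (2 * Real.tanh (π * (2 * v))) + π / (2 * Real.tanh (π * (2 * (u - v))))
        = π * S / (2 * (s1 * s2)) := by
      rw [show π * (2 * v) = 2*π*v by ring, show π * (2 * (u - v)) = 2*π*(u-v) by ring,
        Real.tanh_eq_sinh_div_cosh, Real.tanh_eq_sinh_div_cosh, ← hs1def, ← hs2def]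
      rw [← hsum]
      field_simp
      ring
    have hcpos : 0 < π / (2 * Real.tanh (π * (2 * v))) + π / (2 * Real.tanh (π * (2 * (u - v)))) := by
      rw [hcval]
      positivity
    rw [inner_gauss n j hcpos, hcval, one_sub_exp v, one_sub_exp (u-v),
      zpow_neg, zpow_neg, zpow_natCast, zpow_natCast,
      show Real.cosh (2*π*u) - Real.cosh (2*π*(2*v-u)) = 2*(s1*s2) by
        rw [show 2*π*u = 2*π*v + 2*π*(u-v) by ring,
          show 2*π*(2*v-u) = 2*π*v - 2*π*(u-v) by ring, Real.cosh_add, Real.cosh_sub,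
          hs1def, hs2def]
        ring]
    rw [← mul_inv, ← mul_pow,
      show (Real.exp (-(2*π*v)) * (2*s1)) * (Real.exp (-(2*π*(u-v))) * (2*s2))
        = (Real.exp (-(2*π*v)) * Real.exp (-(2*π*(u-v)))) * (2*s1*(2*s2)) by ring,
      ← Real.exp_add, show -(2*π*v) + -(2*π*(u-v)) = -(2*π*u) by ring, Real.exp_neg, hK]
    have hP : Real.exp (2*π*u) ≠ 0 := (Real.exp_pos _).ne'
    field_simp
    rw [div_pow, div_pow]
    field_simp
    ring_nf
    rw [show (4:ℝ) = 2^2 by norm_num, ← pow_mul, mul_comm 2 n]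
  rw [intervalIntegral.integral_congr hcongr]
  have hcos : ∀ v : ℝ, HasDerivAt (fun w => Real.sinh (2 * π * (2 * w - u)) / (4 * π))
      (Real.cosh (2 * π * (2 * v - u))) v := by
    intro v
    have h1 : HasDerivAt (fun w : ℝ => 2 * π * (2 * w - u)) (4 * π) v := by
      simpa using ((hasDerivAt_id v).const_mul 2 |>.sub_const u).const_mul (2 * π) |>.congr_deriv (by ring)
    have := (Real.hasDerivAt_sinh _).comp v h1
    simpa [mul_comm, mul_div_assoc] using this.div_const (4 * π) |>.congr_deriv (by field_simp)
  have hint : ∫ v in (0:ℝ)..u, Real.cosh (2 * π * (2 * v - u))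
      = Real.sinh (2 * π * u) / (2 * π) := by
    rw [intervalIntegral.integral_eq_sub_of_hasDerivAt (fun v _ => hcos v)
      (Continuous.intervalIntegrable (by continuity) _ _)]
    rw [show 2 * π * (2 * u - u) = 2 * π * u by ring, show 2 * π * (2 * 0 - u) = -(2 * π * u) by ring,
      Real.sinh_neg]
    field_simp
    ring
  rw [intervalIntegral.integral_const_mul, intervalIntegral.integral_sub
    (intervalIntegrable_const) (Continuous.intervalIntegrable (by continuity) _ _),
    intervalIntegral.integral_const, hint]
  -- final algebra
  have hE4 : Real.exp (-(4*π*u)) = ((Real.exp (2*π*u))⁻¹)^2 := by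
    rw [← Real.exp_neg, sq, ← Real.exp_add]; ring_nf
  have hP : Real.exp (2*π*u) ≠ 0 := (Real.exp_pos _).ne'
  rw [sub_zero, smul_eq_mul, one_sub_exp u, hE4, Real.cosh_eq, Real.exp_neg, ← hSdef, hK]
  field_simp
  rw [div_pow]
  field_simp
  ring
end
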